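/- Let V be a real inner product space with 2 ≤ dim V. Then there is no linear map N : V → V such that ⟨y, z⟩ • y = ‖y‖² • (N z) for all y, z ∈ V. -/

import Mathlib

open RealInnerProductSpace

/-- tensorial impossibility in the proof of Lemma 1.
In a real inner product space of dimension at least 2, there is no linear map
`N : V → V` with `⟪y, z⟫ • y = ‖y‖² • N z` for all `y, z`. -/
theorem stmt8 {V : Type*} [NormedAddCommGroup V] [InnerProductSpace ℝ V]
    (hdim : 2 ≤ Module.rank ℝ V) :
    ¬ ∃ N : V →ₗ[ℝ] V, ∀ y z : V, ⟪y, z⟫ • y = (‖y‖ ^ 2 : ℝ) • N z := by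
  rintro ⟨N, hN⟩
  have h1 : (1 : Cardinal) < Module.rank ℝ V := lt_of_lt_of_le (by norm_num) hdim
  have hnt : Nontrivial V := (rank_pos_iff_nontrivial (R := ℝ)).1 (lt_trans (by norm_num) h1)
  obtain ⟨x, hx⟩ := exists_ne (0 : V)
  obtain ⟨w, hw⟩ := exists_linearIndependent_pair_of_one_lt_rank h1 hx
  -- orthogonalize
  set c : ℝ := ⟪x, w⟫ / (‖x‖ ^ 2)
  set y : V := w - c • x with hy
  have hxnorm : (‖x‖ ^ 2 : ℝ) ≠ 0 := pow_ne_zero 2 (norm_ne_zero_iff.mpr hx)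
  have horth : ⟪y, x⟫ = 0 := by
    have : ⟪x, y⟫ = 0 := by
      simp only [hy, inner_sub_right, inner_smul_right, real_inner_self_eq_norm_sq]
      simp only [c, div_mul_cancel₀ _ hxnorm, sub_self]
    rwa [real_inner_comm]
  have hyne : y ≠ 0 := by
    intro h0
    have hwcx : w = c • x := by
      have := sub_eq_zero.mp h0
      simpa using this
    obtain ⟨hw1, hw2⟩ := linearIndependent_fin2.mp hw
    simp only [Matrix.cons_val_one, Matrix.head_cons, Matrix.cons_val_zero] at hw1 hw2
    rcases eq_or_ne c 0 with hc | hc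
    · exact hw1 (by simp [hwcx, hc])
    · exact hw2 c⁻¹ (by rw [hwcx, smul_smul, inv_mul_cancel₀ hc, one_smul])
  -- N x = x from y := x, z := x
  have hNx : N x = x := by
    have := hN x x
    rw [real_inner_self_eq_norm_sq] at this
    exact (smul_right_injective V hxnorm this.symm)
  -- 0 = ‖y‖² • N x from y, x
  have := hN y x
  rw [horth, zero_smul, hNx] at this
  have hynorm : (‖y‖ ^ 2 : ℝ) ≠ 0 := pow_ne_zero 2 (norm_ne_zero_iff.mpr hyne)
  exact hx (smul_eq_zero.mp this.symm |>.resolve_left hynorm)
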